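/- Let A be a symmetric integer matrix congruent modulo 4 to diag(r·[[2,1],[1,2]], s·[[0,1],[1,0]], t·[[0,2],[2,0]], p·[2], m·[0]) with p ≥ 3. Then there is an integer matrix P with det(P) = ±1 such that P^T A P modulo 4 equals diag(r·[[2,1],[1,2]], s·[[0,1],[1,0]], (t+1)·[[0,2],[2,0]], (p−2)·[2], m·[0]). -/

import Mathlib

/-- Entry `(i,j)` of the block diagonal matrix
`diag(r·[[2,1],[1,2]], s·[[0,1],[1,0]], t·[[0,2],[2,0]], p·[2], m·[0])`
(the `m` trailing zero rows/columns are implicit: the entry is `0` there). -/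
def nfEntry (r s t p : ℕ) (i j : ℕ) : ℤ :=
  if i < 2*r ∧ j < 2*r then (if i = j then 2 else if i / 2 = j / 2 then 1 else 0)
  else if 2*r ≤ i ∧ i < 2*r+2*s ∧ 2*r ≤ j ∧ j < 2*r+2*s then
    (if i ≠ j ∧ i / 2 = j / 2 then 1 else 0)
  else if 2*r+2*s ≤ i ∧ i < 2*r+2*s+2*t ∧ 2*r+2*s ≤ j ∧ j < 2*r+2*s+2*t then
    (if i ≠ j ∧ i / 2 = j / 2 then 2 else 0)
  else if 2*r+2*s+2*t ≤ i ∧ i < 2*r+2*s+2*t+p ∧ i = j then 2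
  else 0


private lemma nf_symm (r s t p i j : ℕ) : nfEntry r s t p i j = nfEntry r s t p j i := by
  unfold nfEntry; split_ifs <;> omega

private lemma src0 (r s t p : ℕ) (hp : 3 ≤ p) (j : ℕ) :
    nfEntry r s t p (2*r+2*s+2*t) j = if j = 2*r+2*s+2*t then 2 else 0 := by
  unfold nfEntry; split_ifs <;> omega

private lemma src1 (r s t p : ℕ) (hp : 3 ≤ p) (j : ℕ) :
    nfEntry r s t p (2*r+2*s+2*t+1) j = if j = 2*r+2*s+2*t+1 then 2 else 0 := by
  unfold nfEntry; split_ifs <;> omega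

private lemma src2 (r s t p : ℕ) (hp : 3 ≤ p) (j : ℕ) :
    nfEntry r s t p (2*r+2*s+2*t+2) j = if j = 2*r+2*s+2*t+2 then 2 else 0 := by
  unfold nfEntry; split_ifs <;> omega

private lemma tgt0 (r s t p : ℕ) (hp : 3 ≤ p) (j : ℕ) :
    nfEntry r s (t+1) (p-2) (2*r+2*s+2*t) j = if j = 2*r+2*s+2*t+1 then 2 else 0 := by
  unfold nfEntry; split_ifs <;> omega

private lemma tgt1 (r s t p : ℕ) (hp : 3 ≤ p) (j : ℕ) :
    nfEntry r s (t+1) (p-2) (2*r+2*s+2*t+1) j = if j = 2*r+2*s+2*t then 2 else 0 := by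
  unfold nfEntry; split_ifs <;> omega

private lemma tgt2 (r s t p : ℕ) (hp : 3 ≤ p) (j : ℕ) :
    nfEntry r s (t+1) (p-2) (2*r+2*s+2*t+2) j = if j = 2*r+2*s+2*t+2 then 2 else 0 := by
  unfold nfEntry; split_ifs <;> omega

private lemma nf_eq_outside (r s t p : ℕ) (hp : 3 ≤ p) (i j : ℕ)
    (hi0 : i ≠ 2*r+2*s+2*t) (hi1 : i ≠ 2*r+2*s+2*t+1) (hi2 : i ≠ 2*r+2*s+2*t+2)
    (hj0 : j ≠ 2*r+2*s+2*t) (hj1 : j ≠ 2*r+2*s+2*t+1) (hj2 : j ≠ 2*r+2*s+2*t+2) :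
    nfEntry r s t p i j = nfEntry r s (t+1) (p-2) i j := by
  unfold nfEntry; split_ifs <;> omega

open Matrix in
/-- Lemma 2.3: if p ≥ 3 then two 1×1 blocks [2] can be traded for one block [[0,2],[2,0]]. -/
theorem stmt_4 (n r s t p m : ℕ) (A : Matrix (Fin n) (Fin n) ℤ)
    (hsym : A.IsSymm)
    (hn : n = 2*r + 2*s + 2*t + p + m)
    (hge : 3 ≤ p)
    (hA : ∀ i j : Fin n,
      ((A i j : ℤ) : ZMod 4) = ((nfEntry r s t p (i : ℕ) (j : ℕ) : ℤ) : ZMod 4)) :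
    ∃ P : Matrix (Fin n) (Fin n) ℤ, (P.det = 1 ∨ P.det = -1) ∧
      ∀ i j : Fin n,
        (((Pᵀ * A * P) i j : ℤ) : ZMod 4) = ((nfEntry r s (t+1) (p-2) (i : ℕ) (j : ℕ) : ℤ) : ZMod 4) := by
  have hq1 : 2*r+2*s+2*t < n := by omega
  have hq2 : 2*r+2*s+2*t+1 < n := by omega
  have hq3 : 2*r+2*s+2*t+2 < n := by omega
  set e0 : Fin n := ⟨2*r+2*s+2*t, hq1⟩ with he0
  set e1 : Fin n := ⟨2*r+2*s+2*t+1, hq2⟩ with he1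
  set e2 : Fin n := ⟨2*r+2*s+2*t+2, hq3⟩ with he2
  have h01 : e0 ≠ e1 := by simp [he0, he1, Fin.ext_iff]
  have h02 : e0 ≠ e2 := by simp [he0, he2, Fin.ext_iff]
  have h12 : e1 ≠ e2 := by simp [he1, he2, Fin.ext_iff]
  have h10 : e1 ≠ e0 := h01.symm
  have h20 : e2 ≠ e0 := h02.symm
  have h21 : e2 ≠ e1 := h12.symm
  set N : Matrix (Fin n) (Fin n) ℤ := Matrix.of (fun i j => nfEntry r s t p (i:ℕ) (j:ℕ)) with hN
  set P : Matrix (Fin n) (Fin n) ℤ :=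
    transvection e1 e0 1 * (transvection e2 e1 1 * transvection e0 e2 1) with hP
  refine ⟨P, Or.inl ?_, ?_⟩
  · simp [hP, Matrix.det_mul, Matrix.det_transvection_of_ne, h10, h21, h02]
  have hmap : A.map (Int.castRingHom (ZMod 4)) = N.map (Int.castRingHom (ZMod 4)) := by
    ext i j; simpa [hN] using hA i j
  intro i j
  have hcast : (((Pᵀ * A * P) i j : ℤ) : ZMod 4) = (((Pᵀ * N * P) i j : ℤ) : ZMod 4) := by
    have hm : (Pᵀ * A * P).map (Int.castRingHom (ZMod 4))
        = (Pᵀ * N * P).map (Int.castRingHom (ZMod 4)) := by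
      rw [Matrix.map_mul, Matrix.map_mul, hmap, ← Matrix.map_mul, ← Matrix.map_mul]
    exact Matrix.ext_iff.mpr hm i j
  rw [hcast, ZMod.intCast_eq_intCast_iff]
  have hT : ∀ (a b : Fin n) (M : Matrix (Fin n) (Fin n) ℤ) (x y : Fin n),
      (transvection a b (1:ℤ) * M) x y = M x y + if x = a then M b y else 0 := by
    intro a b M x y
    rcases eq_or_ne x a with h|h
    · subst h; simp
    · simp [h]
  have hMr : ∀ (a b : Fin n) (M : Matrix (Fin n) (Fin n) ℤ) (x y : Fin n),
      (M * transvection a b (1:ℤ)) x y = M x y + if y = b then M x a else 0 := by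
    intro a b M x y
    rcases eq_or_ne y b with h|h
    · subst h; simp
    · simp [h]
  have htv : ∀ (a b : Fin n), (transvection a b (1:ℤ))ᵀ = transvection b a 1 := by
    intro a b; ext x y
    simp [transvection, Matrix.single, Matrix.one_apply, Matrix.transpose_apply, and_comm, eq_comm]
  have hfact : Pᵀ * N * P
      = transvection e2 e0 1 * (transvection e1 e2 1 * (transvection e0 e1 1 *
        (N * transvection e1 e0 1 * transvection e2 e1 1 * transvection e0 e2 1))) := by
    rw [hP]
    simp only [Matrix.transpose_mul, htv, Matrix.mul_assoc]
  have hr0 : ∀ y : Fin n, N e0 y = if y = e0 then 2 else 0 := by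
    intro y
    show nfEntry r s t p (2*r+2*s+2*t) (y:ℕ) = _
    rw [src0 r s t p hge]
    rcases eq_or_ne y e0 with rfl|hy
    · simp; rfl
    · rw [if_neg, if_neg hy]; exact fun hh => hy (Fin.ext hh)
  have hr1 : ∀ y : Fin n, N e1 y = if y = e1 then 2 else 0 := by
    intro y
    show nfEntry r s t p (2*r+2*s+2*t+1) (y:ℕ) = _
    rw [src1 r s t p hge]
    rcases eq_or_ne y e1 with rfl|hy
    · simp; rfl
    · rw [if_neg, if_neg hy]; exact fun hh => hy (Fin.ext hh)
  have hr2 : ∀ y : Fin n, N e2 y = if y = e2 then 2 else 0 := by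
    intro y
    show nfEntry r s t p (2*r+2*s+2*t+2) (y:ℕ) = _
    rw [src2 r s t p hge]
    rcases eq_or_ne y e2 with rfl|hy
    · simp; rfl
    · rw [if_neg, if_neg hy]; exact fun hh => hy (Fin.ext hh)
  have hc0 : ∀ x : Fin n, N x e0 = if x = e0 then 2 else 0 := by
    intro x
    show nfEntry r s t p (x:ℕ) (2*r+2*s+2*t) = _
    rw [nf_symm, src0 r s t p hge]
    rcases eq_or_ne x e0 with rfl|hx
    · simp; rfl
    · rw [if_neg, if_neg hx]; exact fun hh => hx (Fin.ext hh)
  have hc1 : ∀ x : Fin n, N x e1 = if x = e1 then 2 else 0 := by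
    intro x
    show nfEntry r s t p (x:ℕ) (2*r+2*s+2*t+1) = _
    rw [nf_symm, src1 r s t p hge]
    rcases eq_or_ne x e1 with rfl|hx
    · simp; rfl
    · rw [if_neg, if_neg hx]; exact fun hh => hx (Fin.ext hh)
  have hc2 : ∀ x : Fin n, N x e2 = if x = e2 then 2 else 0 := by
    intro x
    show nfEntry r s t p (x:ℕ) (2*r+2*s+2*t+2) = _
    rw [nf_symm, src2 r s t p hge]
    rcases eq_or_ne x e2 with rfl|hx
    · simp; rfl
    · rw [if_neg, if_neg hx]; exact fun hh => hx (Fin.ext hh)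
  rw [hfact]
  simp only [hT, hMr, hr0, hr1, hr2, hc0, hc1, hc2, h01, h02, h12, h10, h20, h21,
    if_true, if_false, eq_self_iff_true, ite_true, ite_false, if_neg, if_pos,
    mul_ite, ite_mul, add_zero, zero_add, mul_zero, zero_mul, mul_one, one_mul]
  rcases eq_or_ne i e0 with rfl|hi0
  · 
    rcases eq_or_ne j e0 with rfl|hj0
    · 
      rw [tgt0 r s t p hge, if_neg (show ¬((2*r+2*s+2*t:ℕ) = 2*r+2*s+2*t+1) from by omega)]
      simp [hr0, hr1, hr2, hc0, hc1, hc2, h01, h02, h12, h10, h20, h21]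
      try decide
    rcases eq_or_ne j e1 with rfl|hj1
    · 
      rw [tgt0 r s t p hge, if_pos (show ((e1:Fin n):ℕ) = 2*r+2*s+2*t+1 from rfl)]
      simp [hr0, hr1, hr2, hc0, hc1, hc2, h01, h02, h12, h10, h20, h21]
      try decide
    rcases eq_or_ne j e2 with rfl|hj2
    · 
      rw [tgt0 r s t p hge, if_neg (show ¬((2*r+2*s+2*t+2:ℕ) = 2*r+2*s+2*t+1) from by omega)]
      simp [hr0, hr1, hr2, hc0, hc1, hc2, h01, h02, h12, h10, h20, h21]
      try decide
    have hj0' : (j:ℕ) ≠ 2*r+2*s+2*t := fun hh => hj0 (Fin.ext hh)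
    have hj1' : (j:ℕ) ≠ 2*r+2*s+2*t+1 := fun hh => hj1 (Fin.ext hh)
    have hj2' : (j:ℕ) ≠ 2*r+2*s+2*t+2 := fun hh => hj2 (Fin.ext hh)
    rw [tgt0 r s t p hge, if_neg hj1']
    simp [hr0, hr1, hr2, hc0, hc1, hc2, hj0, hj1, hj2, h01, h02, h12, h10, h20, h21]
    try decide
  rcases eq_or_ne i e1 with rfl|hi1
  · 
    rcases eq_or_ne j e0 with rfl|hj0
    · 
      rw [tgt1 r s t p hge, if_pos (show ((e0:Fin n):ℕ) = 2*r+2*s+2*t from rfl)]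
      simp [hr0, hr1, hr2, hc0, hc1, hc2, h01, h02, h12, h10, h20, h21]
      try decide
    rcases eq_or_ne j e1 with rfl|hj1
    · 
      rw [tgt1 r s t p hge, if_neg (show ¬((2*r+2*s+2*t+1:ℕ) = 2*r+2*s+2*t) from by omega)]
      simp [hr0, hr1, hr2, hc0, hc1, hc2, h01, h02, h12, h10, h20, h21]
      try decide
    rcases eq_or_ne j e2 with rfl|hj2
    · 
      rw [tgt1 r s t p hge, if_neg (show ¬((2*r+2*s+2*t+2:ℕ) = 2*r+2*s+2*t) from by omega)]
      simp [hr0, hr1, hr2, hc0, hc1, hc2, h01, h02, h12, h10, h20, h21]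
      try decide
    have hj0' : (j:ℕ) ≠ 2*r+2*s+2*t := fun hh => hj0 (Fin.ext hh)
    have hj1' : (j:ℕ) ≠ 2*r+2*s+2*t+1 := fun hh => hj1 (Fin.ext hh)
    have hj2' : (j:ℕ) ≠ 2*r+2*s+2*t+2 := fun hh => hj2 (Fin.ext hh)
    rw [tgt1 r s t p hge, if_neg hj0']
    simp [hr0, hr1, hr2, hc0, hc1, hc2, hj0, hj1, hj2, h01, h02, h12, h10, h20, h21]
    try decide
  rcases eq_or_ne i e2 with rfl|hi2
  · 
    rcases eq_or_ne j e0 with rfl|hj0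
    · 
      rw [tgt2 r s t p hge, if_neg (show ¬((2*r+2*s+2*t:ℕ) = 2*r+2*s+2*t+2) from by omega)]
      simp [hr0, hr1, hr2, hc0, hc1, hc2, h01, h02, h12, h10, h20, h21]
      try decide
    rcases eq_or_ne j e1 with rfl|hj1
    · 
      rw [tgt2 r s t p hge, if_neg (show ¬((2*r+2*s+2*t+1:ℕ) = 2*r+2*s+2*t+2) from by omega)]
      simp [hr0, hr1, hr2, hc0, hc1, hc2, h01, h02, h12, h10, h20, h21]
      try decide
    rcases eq_or_ne j e2 with rfl|hj2
    · 
      rw [tgt2 r s t p hge, if_pos (show ((e2:Fin n):ℕ) = 2*r+2*s+2*t+2 from rfl)]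
      simp [hr0, hr1, hr2, hc0, hc1, hc2, h01, h02, h12, h10, h20, h21]
      try decide
    have hj0' : (j:ℕ) ≠ 2*r+2*s+2*t := fun hh => hj0 (Fin.ext hh)
    have hj1' : (j:ℕ) ≠ 2*r+2*s+2*t+1 := fun hh => hj1 (Fin.ext hh)
    have hj2' : (j:ℕ) ≠ 2*r+2*s+2*t+2 := fun hh => hj2 (Fin.ext hh)
    rw [tgt2 r s t p hge, if_neg hj2']
    simp [hr0, hr1, hr2, hc0, hc1, hc2, hj0, hj1, hj2, h01, h02, h12, h10, h20, h21]
    try decide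
  rcases eq_or_ne j e0 with rfl|hj0
  · 
    have hi0' : (i:ℕ) ≠ 2*r+2*s+2*t := fun hh => hi0 (Fin.ext hh)
    have hi1' : (i:ℕ) ≠ 2*r+2*s+2*t+1 := fun hh => hi1 (Fin.ext hh)
    have hi2' : (i:ℕ) ≠ 2*r+2*s+2*t+2 := fun hh => hi2 (Fin.ext hh)
    rw [nf_symm r s (t+1) (p-2) ((i:ℕ)) (2*r+2*s+2*t), tgt0 r s t p hge, if_neg hi1']
    simp [hr0, hr1, hr2, hc0, hc1, hc2, hi0, hi1, hi2, h01, h02, h12, h10, h20, h21]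
    try decide
  rcases eq_or_ne j e1 with rfl|hj1
  · 
    have hi0' : (i:ℕ) ≠ 2*r+2*s+2*t := fun hh => hi0 (Fin.ext hh)
    have hi1' : (i:ℕ) ≠ 2*r+2*s+2*t+1 := fun hh => hi1 (Fin.ext hh)
    have hi2' : (i:ℕ) ≠ 2*r+2*s+2*t+2 := fun hh => hi2 (Fin.ext hh)
    rw [nf_symm r s (t+1) (p-2) ((i:ℕ)) (2*r+2*s+2*t+1), tgt1 r s t p hge, if_neg hi0']
    simp [hr0, hr1, hr2, hc0, hc1, hc2, hi0, hi1, hi2, h01, h02, h12, h10, h20, h21]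
    try decide
  rcases eq_or_ne j e2 with rfl|hj2
  · 
    have hi0' : (i:ℕ) ≠ 2*r+2*s+2*t := fun hh => hi0 (Fin.ext hh)
    have hi1' : (i:ℕ) ≠ 2*r+2*s+2*t+1 := fun hh => hi1 (Fin.ext hh)
    have hi2' : (i:ℕ) ≠ 2*r+2*s+2*t+2 := fun hh => hi2 (Fin.ext hh)
    rw [nf_symm r s (t+1) (p-2) ((i:ℕ)) (2*r+2*s+2*t+2), tgt2 r s t p hge, if_neg hi2']
    simp [hr0, hr1, hr2, hc0, hc1, hc2, hi0, hi1, hi2, h01, h02, h12, h10, h20, h21]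
    try decide
  have hi0' : (i:ℕ) ≠ 2*r+2*s+2*t := fun hh => hi0 (Fin.ext hh)
  have hi1' : (i:ℕ) ≠ 2*r+2*s+2*t+1 := fun hh => hi1 (Fin.ext hh)
  have hi2' : (i:ℕ) ≠ 2*r+2*s+2*t+2 := fun hh => hi2 (Fin.ext hh)
  have hj0' : (j:ℕ) ≠ 2*r+2*s+2*t := fun hh => hj0 (Fin.ext hh)
  have hj1' : (j:ℕ) ≠ 2*r+2*s+2*t+1 := fun hh => hj1 (Fin.ext hh)
  have hj2' : (j:ℕ) ≠ 2*r+2*s+2*t+2 := fun hh => hj2 (Fin.ext hh)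
  rw [← nf_eq_outside r s t p hge (i:ℕ) (j:ℕ) hi0' hi1' hi2' hj0' hj1' hj2']
  simp [hi0, hi1, hi2, hj0, hj1, hj2, h01, h02, h12, h10, h20, h21]
  try exact Int.ModEq.refl _
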